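/- arXiv:1003.3764 — 2 statements merged into one kernel-verified Lean document; each statement's English description precedes it below -/
import Mathlib

section
/- Fix ξ ∈ ℝ³ with ξ ≠ 0 and let ζ = ζ_R + i ζ_I with ζ_R, ζ_I ∈ ℝ³. Then ζ·ζ = 0 and (ξ+ζ)·(ξ+ζ) = 0 (bilinear dot products) if and only if there exists ξ⊥ ∈ ℝ³ with ξ⊥·ξ = 0 such that ζ_R = -ξ/2 + ξ⊥, ζ_I·ξ = 0, ζ_I·ξ⊥ = 0, and |ζ_I| = |ζ_R|. -/
open Complex

/-- characterization of `𝒱_ξ`. For `ξ ≠ 0` and `ζ = ζ_R + iζ_I`,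
`ζ·ζ = 0` and `(ξ+ζ)·(ξ+ζ) = 0` (bilinear dot products) iff there is a real
vector `ξ⊥ ⊥ ξ` with `ζ_R = -ξ/2 + ξ⊥`, `ζ_I ⊥ ξ`, `ζ_I ⊥ ξ⊥` and `|ζ_I| = |ζ_R|`. -/
theorem stmt_1 (ξ ζR ζI : Fin 3 → ℝ) (hξ : ξ ≠ 0) :
    ((∑ i : Fin 3, ((ζR i : ℂ) + Complex.I * ζI i) * ((ζR i : ℂ) + Complex.I * ζI i) = 0) ∧
     (∑ i : Fin 3, ((ξ i : ℂ) + ((ζR i : ℂ) + Complex.I * ζI i)) *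
        ((ξ i : ℂ) + ((ζR i : ℂ) + Complex.I * ζI i)) = 0))
    ↔ ∃ ξp : Fin 3 → ℝ,
        (∑ i : Fin 3, ξp i * ξ i) = 0 ∧
        (ζR = fun i => -ξ i / 2 + ξp i) ∧
        (∑ i : Fin 3, ζI i * ξ i) = 0 ∧
        (∑ i : Fin 3, ζI i * ξp i) = 0 ∧
        Real.sqrt (∑ i : Fin 3, ζI i ^ 2) = Real.sqrt (∑ i : Fin 3, ζR i ^ 2) := by
  simp only [Fin.sum_univ_three, Complex.ext_iff] at *
  constructor
  · rintro ⟨⟨h1re, h1im⟩, ⟨h2re, h2im⟩⟩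
    simp [Complex.ext_iff] at h1re h1im h2re h2im
    refine ⟨fun i => ζR i + ξ i / 2, ?_, ?_, ?_, ?_, ?_⟩
    · nlinarith [h1re, h2re]
    · funext i; ring
    · nlinarith [h1im, h2im]
    · nlinarith [h1im, h2im]
    · congr 1; nlinarith [h1re]
  · rintro ⟨ξp, hp, hR, hI, hIp, hsq⟩
    subst hR
    have h0I : 0 ≤ ζI 0 ^ 2 + ζI 1 ^ 2 + ζI 2 ^ 2 := by positivity
    have h0R : 0 ≤ (-ξ 0 / 2 + ξp 0) ^ 2 + (-ξ 1 / 2 + ξp 1) ^ 2 + (-ξ 2 / 2 + ξp 2) ^ 2 := by positivity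
    simp only at hsq
    rw [Real.sqrt_inj h0I h0R] at hsq
    refine ⟨⟨?_, ?_⟩, ?_, ?_⟩ <;> simp [Complex.ext_iff]
    · linear_combination -hsq
    · linear_combination -hI + 2*hIp
    · linear_combination -hsq + 2*hp
    · linear_combination hI + 2*hIp
end

section
/- For a two-layer radial conductivity on the unit ball (γ = γ₁ for r < r₁, γ = γ₂ = 1 for r₁ ≤ r ≤ 1), the eigenvalue of the Dirichlet-to-Neumann map on degree-l spherical harmonics (l ≥ 1) is λ_l = l − (2l+1)/(1 + C₁), where C₁ = w₁ (β_l γ₂ + γ₁)/(γ₂ − γ₁) with w₁ = r₁^{−(2l+1)} and β_l = (l+1)/l, provided γ₂ ≠ γ₁. -/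
/-- two-layer radial conductivity on the unit ball
(`γ = γ₁` for `r < r₁`, `γ = γ₂ = 1` for `r₁ ≤ r ≤ 1`), with separated radial
solutions `R_l(r) = A₁ r^l` on the inner layer (regularity, `B₁ = 0`) and
`R_l(r) = A₂ r^l + B₂ r^{-(l+1)}` on the outer layer. Continuity of `R_l` and of
`γ R_l'` at `r = r₁`, together with `R_l(1) = A₂ + B₂ = 1`, yields the
Dirichlet-to-Neumann eigenvalue
`λ_l = l A₂ - (l+1) B₂ = l - (2l+1)/(1 + C₁)` where
`C₁ = w₁ (β_l γ₂ + γ₁)/(γ₂ - γ₁)`, `w₁ = r₁^{-(2l+1)}`, `β_l = (l+1)/l`. -/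
theorem stmt_15 (l : ℕ) (hl : 1 ≤ l) (γ₁ γ₂ r₁ : ℝ) (hγ₂ : γ₂ = 1) (hγ : γ₂ ≠ γ₁)
    (hr₁0 : 0 < r₁) (hr₁1 : r₁ < 1)
    (A₁ A₂ B₂ : ℝ)
    (hcont : A₁ * r₁ ^ (l : ℤ) = A₂ * r₁ ^ (l : ℤ) + B₂ * r₁ ^ (-(l + 1 : ℤ)))
    (hflux : γ₁ * ((l : ℝ) * A₁ * r₁ ^ ((l : ℤ) - 1))
      = γ₂ * ((l : ℝ) * A₂ * r₁ ^ ((l : ℤ) - 1) - ((l : ℝ) + 1) * B₂ * r₁ ^ (-(l + 2 : ℤ))))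
    (hbdry : A₂ + B₂ = 1) :
    (l : ℝ) * A₂ - ((l : ℝ) + 1) * B₂
      = (l : ℝ) - (2 * (l : ℝ) + 1) /
          (1 + r₁ ^ (-(2 * (l : ℤ) + 1)) * ((((l : ℝ) + 1) / (l : ℝ)) * γ₂ + γ₁) / (γ₂ - γ₁)) := by

  have hr : r₁ ≠ 0 := ne_of_gt hr₁0
  have hl0 : (l : ℝ) ≠ 0 := by
    have : 0 < l := hl
    exact_mod_cast this.ne'
  have hγd : γ₂ - γ₁ ≠ 0 := sub_ne_zero.mpr hγ
  set w : ℝ := r₁ ^ (-(2 * (l : ℤ) + 1)) with hw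
  have hw1 : w * r₁ ^ (l : ℤ) = r₁ ^ (-(l + 1 : ℤ)) := by
    rw [hw, ← zpow_add₀ hr]; congr 1; ring
  have hw2 : w * r₁ ^ ((l : ℤ) - 1) = r₁ ^ (-(l + 2 : ℤ)) := by
    rw [hw, ← zpow_add₀ hr]; congr 1; ring
  have hA1 : A₁ = A₂ + B₂ * w := by
    have h := hcont
    rw [← hw1] at h
    have h2 : A₁ * r₁ ^ (l : ℤ) = (A₂ + B₂ * w) * r₁ ^ (l : ℤ) := by
      rw [h]; ring
    exact mul_right_cancel₀ (zpow_ne_zero _ hr) h2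
  have hkey : (γ₂ - γ₁) * ((l : ℝ) * A₂) = (((l : ℝ) + 1) * γ₂ + (l : ℝ) * γ₁) * B₂ * w := by
    have h := hflux
    rw [← hw2, hA1] at h
    have h2 : (γ₂ - γ₁) * ((l : ℝ) * A₂) * r₁ ^ ((l : ℤ) - 1)
        = ((((l : ℝ) + 1) * γ₂ + (l : ℝ) * γ₁) * B₂ * w) * r₁ ^ ((l : ℤ) - 1) := by
      nlinarith [h]
    exact mul_right_cancel₀ (zpow_ne_zero _ hr) h2
  set C : ℝ := w * ((((l : ℝ) + 1) / (l : ℝ)) * γ₂ + γ₁) / (γ₂ - γ₁) with hC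
  have hCA : C * B₂ = A₂ := by
    rw [hC]
    field_simp
    nlinarith [hkey]
  have hsum : (1 + C) * B₂ = 1 := by
    rw [add_mul, one_mul, hCA]
    linarith [hbdry]
  have hCne : 1 + C ≠ 0 := by
    intro h0
    rw [h0, zero_mul] at hsum
    exact one_ne_zero hsum.symm
  have hB : (2 * (l : ℝ) + 1) / (1 + C) = (2 * (l : ℝ) + 1) * B₂ := by
    rw [eq_comm, mul_comm]
    rw [eq_div_iff hCne]
    nlinarith [hsum]
  rw [hB]
  have hA2 : A₂ = 1 - B₂ := by linarith
  rw [hA2]; ring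
end
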